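/- The categorical product G ⊠ H of directed reflexive graphs, with vertex set G_V × H_V and edges (g,h) ⇝ (g',h') iff (g = g' and h ⇝ h') or (g ⇝ g' and h = h') or (g ⇝ g' and h ⇝ h'), is the categorical product in DiGraph and defines a cartesian closed structure on DiGraph. -/
import Mathlib


open CategoryTheory

/-- A directed reflexive graph: a set with a reflexive binary relation `adj`
(`adj x y` means there is an edge `x ⇝ y`). -/
structure DiGraph where
  V : Type
  adj : V → V → Prop
  refl : ∀ x, adj x x

/-- Morphisms of directed reflexive graphs are relation-preserving functions. -/
instance : Category DiGraph where
  Hom G H := { f : G.V → H.V // ∀ x y, G.adj x y → H.adj (f x) (f y) }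
  id G := ⟨fun x => x, fun _ _ h => h⟩
  comp f g := ⟨fun x => g.1 (f.1 x), fun x y h => g.2 _ _ (f.2 x y h)⟩

/-- `J₀`, the one-vertex graph. -/
def J0 : DiGraph := ⟨PUnit, fun _ _ => True, fun _ => trivial⟩

/-- `J₁`, the graph with two vertices `0 = false`, `1 = true` and one
non-loop edge `0 ⇝ 1`. -/
def J1 : DiGraph :=
  ⟨Bool, fun x y => x = y ∨ (x = false ∧ y = true), fun _ => Or.inl rfl⟩

/-- The box product `G □ H`. -/
def boxProd (G H : DiGraph) : DiGraph where
  V := G.V × H.V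
  adj x y := (x.1 = y.1 ∧ H.adj x.2 y.2) ∨ (G.adj x.1 y.1 ∧ x.2 = y.2)
  refl x := Or.inl ⟨rfl, H.refl x.2⟩

/-- The categorical product `G ⊠ H`. -/
def catProd (G H : DiGraph) : DiGraph where
  V := G.V × H.V
  adj x y := (x.1 = y.1 ∧ H.adj x.2 y.2) ∨ (G.adj x.1 y.1 ∧ x.2 = y.2) ∨
    (G.adj x.1 y.1 ∧ H.adj x.2 y.2)
  refl x := Or.inl ⟨rfl, H.refl x.2⟩

/-- The box product as a bifunctor. -/
def boxBifunctor : DiGraph ⥤ DiGraph ⥤ DiGraph where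
  obj G :=
    { obj := fun H => boxProd G H
      map := fun {H K} φ =>
        ⟨fun x => (x.1, φ.1 x.2), by
          rintro ⟨g, h⟩ ⟨g', h'⟩ (⟨e, hadj⟩ | ⟨gadj, e⟩)
          · exact Or.inl ⟨e, φ.2 _ _ hadj⟩
          · exact Or.inr ⟨gadj, congrArg φ.1 e⟩⟩
      map_id := fun H => rfl
      map_comp := fun f g => rfl }
  map {G G'} ψ :=
    { app := fun H =>
        ⟨fun x => (ψ.1 x.1, x.2), by
          rintro ⟨g, h⟩ ⟨g', h'⟩ (⟨e, hadj⟩ | ⟨gadj, e⟩)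
          · exact Or.inl ⟨congrArg ψ.1 e, hadj⟩
          · exact Or.inr ⟨ψ.2 _ _ gadj, e⟩⟩
      naturality := fun H K φ => rfl }
  map_id := fun G => rfl
  map_comp := fun f g => rfl

/-- The categorical product as a bifunctor. -/
def catBifunctor : DiGraph ⥤ DiGraph ⥤ DiGraph where
  obj G :=
    { obj := fun H => catProd G H
      map := fun {H K} φ =>
        ⟨fun x => (x.1, φ.1 x.2), by
          rintro ⟨g, h⟩ ⟨g', h'⟩ (⟨e, hadj⟩ | ⟨gadj, e⟩ | ⟨gadj, hadj⟩)
          · exact Or.inl ⟨e, φ.2 _ _ hadj⟩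
          · exact Or.inr (Or.inl ⟨gadj, congrArg φ.1 e⟩)
          · exact Or.inr (Or.inr ⟨gadj, φ.2 _ _ hadj⟩)⟩
      map_id := fun H => rfl
      map_comp := fun f g => rfl }
  map {G G'} ψ :=
    { app := fun H =>
        ⟨fun x => (ψ.1 x.1, x.2), by
          rintro ⟨g, h⟩ ⟨g', h'⟩ (⟨e, hadj⟩ | ⟨gadj, e⟩ | ⟨gadj, hadj⟩)
          · exact Or.inl ⟨congrArg ψ.1 e, hadj⟩
          · exact Or.inr (Or.inl ⟨ψ.2 _ _ gadj, e⟩)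
          · exact Or.inr (Or.inr ⟨ψ.2 _ _ gadj, hadj⟩)⟩
      naturality := fun H K φ => rfl }
  map_id := fun G => rfl
  map_comp := fun f g => rfl

/-- The first projection `G ⊠ H ⟶ G`. -/
def catFst (G H : DiGraph) : catProd G H ⟶ G :=
  ⟨fun x => x.1, by
    rintro ⟨g, h⟩ ⟨g', h'⟩ (⟨e, _⟩ | ⟨gadj, _⟩ | ⟨gadj, _⟩)
    · exact (show g = g' from e) ▸ G.refl g
    · exact gadj
    · exact gadj⟩

/-- The second projection `G ⊠ H ⟶ H`. -/
def catSnd (G H : DiGraph) : catProd G H ⟶ H :=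
  ⟨fun x => x.2, by
    rintro ⟨g, h⟩ ⟨g', h'⟩ (⟨_, hadj⟩ | ⟨_, e⟩ | ⟨_, hadj⟩)
    · exact hadj
    · exact (show h = h' from e) ▸ H.refl h
    · exact hadj⟩

/-- The internal hom graph: vertices are graph morphisms, with `f ⇝ f'` iff
`g ⇝ g'` implies `f g ⇝ f' g'`. -/
def ihom (G H : DiGraph) : DiGraph where
  V := G ⟶ H
  adj f f' := ∀ g g', G.adj g g' → H.adj (f.1 g) (f'.1 g')
  refl f := f.2

def ihomFunctor (G : DiGraph) : DiGraph ⥤ DiGraph where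
  obj H := ihom G H
  map {H K} φ := ⟨fun f => f ≫ φ, fun f f' hff' g g' hg => φ.2 _ _ (hff' g g' hg)⟩
  map_id H := rfl
  map_comp f g := rfl

def catAdj (G : DiGraph) : catBifunctor.obj G ⊣ ihomFunctor G :=
  Adjunction.mkOfHomEquiv
    { homEquiv := fun K H =>
        { toFun := fun φ =>
            ⟨fun k => ⟨fun g => φ.1 (g, k), fun g g' hg =>
                φ.2 (g, k) (g', k) (Or.inr (Or.inl ⟨hg, rfl⟩))⟩,
              fun k k' hk g g' hg =>
                φ.2 (g, k) (g', k') (Or.inr (Or.inr ⟨hg, hk⟩))⟩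
          invFun := fun ψ =>
            ⟨fun x => (ψ.1 x.2).1 x.1, by
              rintro ⟨g, k⟩ ⟨g', k'⟩ (⟨e, hk⟩ | ⟨hg, e⟩ | ⟨hg, hk⟩)
              · cases e; exact ψ.2 _ _ hk g g (G.refl g)
              · cases e; exact (ψ.1 k).2 _ _ hg
              · exact ψ.2 _ _ hk g g' hg⟩
          left_inv := fun φ => rfl
          right_inv := fun ψ => rfl }
      homEquiv_naturality_left_symm := fun f g => rfl
      homEquiv_naturality_right := fun f g => rfl }

/-- `G ⊠ H` with the two projections is the categorical product in `DiGraph`, and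
tensoring with any `G` via `⊠` admits a right adjoint, so `⊠` makes `DiGraph`
cartesian closed. -/
theorem catProd_isProduct_and_closed :
    (∀ G H : DiGraph,
      Nonempty (Limits.IsLimit (Limits.BinaryFan.mk (catFst G H) (catSnd G H)))) ∧
    (∀ G : DiGraph, (catBifunctor.obj G).IsLeftAdjoint) := by
  constructor
  · intro G H
    exact ⟨Limits.BinaryFan.isLimitMk
      (fun s => ⟨fun k => ((s.fst).1 k, (s.snd).1 k), fun x y h =>
        Or.inr (Or.inr ⟨(s.fst).2 x y h, (s.snd).2 x y h⟩)⟩)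
      (fun s => rfl) (fun s => rfl)
      (fun s m h1 h2 => by
        apply Subtype.ext; funext k
        exact Prod.ext (congrFun (congrArg Subtype.val h1) k)
          (congrFun (congrArg Subtype.val h2) k))⟩
  · exact fun G => (catAdj G).isLeftAdjoint
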